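/- Let X be a Banach space, T : X → X a bounded linear operator, and d ∈ ℕ. If N(T^d) + R(T^n) is a closed subspace of X and N(T^d) ∩ R(T^n) is finite dimensional, then R(T^n) is closed. -/

import Mathlib

/-- If `N(T^d) + R(T^n)` is closed and `N(T^d) ⊓ R(T^n)` is finite dimensional,
then `R(T^n)` is closed. -/
theorem range_pow_isClosed_of_sup_isClosed
    {X : Type*} [NormedAddCommGroup X] [NormedSpace ℂ X] [CompleteSpace X]
    (T : X →L[ℂ] X) (d n : ℕ)
    (hsup : IsClosed ((LinearMap.ker ((T ^ d : X →L[ℂ] X) : X →ₗ[ℂ] X) ⊔ LinearMap.range ((T ^ n : X →L[ℂ] X) : X →ₗ[ℂ] X) : Submodule ℂ X) : Set X))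
    (hinf : FiniteDimensional ℂ ↥(LinearMap.ker ((T ^ d : X →L[ℂ] X) : X →ₗ[ℂ] X) ⊓ LinearMap.range ((T ^ n : X →L[ℂ] X) : X →ₗ[ℂ] X))) :
    IsClosed ((LinearMap.range ((T ^ n : X →L[ℂ] X) : X →ₗ[ℂ] X) : Submodule ℂ X) : Set X) := by
  set K : Submodule ℂ X := LinearMap.ker ((T ^ d : X →L[ℂ] X) : X →ₗ[ℂ] X) with hK
  set R : Submodule ℂ X := LinearMap.range ((T ^ n : X →L[ℂ] X) : X →ₗ[ℂ] X) with hR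
  set M : Submodule ℂ X := K ⊔ R with hM
  -- K is closed
  have hKclosed : IsClosed (K : Set X) := ContinuousLinearMap.isClosed_ker (T ^ d)
  haveI : CompleteSpace K := hKclosed.completeSpace_coe
  haveI : CompleteSpace M := hsup.completeSpace_coe
  -- the operator B : X × K → X
  set B : X × K →L[ℂ] X := (T ^ n).coprod K.subtypeL with hB
  have hBrange : ∀ z : X × K, B z ∈ M := by
    intro z
    exact M.add_mem (le_sup_right (a := K) (show (T ^ n) z.1 ∈ R from ⟨z.1, rfl⟩))
      (le_sup_left (b := R) z.2.2)
  set B' : X × K →L[ℂ] M := B.codRestrict M hBrange with hB'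
  have hsurj : Function.Surjective B' := by
    rintro ⟨m, hm⟩
    rcases Submodule.mem_sup.mp hm with ⟨k, hk, r, hr, rfl⟩
    rcases hr with ⟨x, rfl⟩
    refine ⟨(x, ⟨k, hk⟩), ?_⟩
    apply Subtype.ext
    simp [hB', hB, add_comm, Module.End.pow_apply, ContinuousLinearMap.coe_coe]
  -- the finite-dimensional subspace F' of K
  set F' : Submodule ℂ K := Submodule.comap K.subtype R with hF'
  have hF'le : F' = Submodule.comap K.subtype (K ⊓ R) := by
    ext k; simp [hF']
  haveI : FiniteDimensional ℂ F' := by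
    rw [hF'le]
    exact LinearEquiv.finiteDimensional (Submodule.comapSubtypeEquivOfLe inf_le_left).symm
  have hF'closed : IsClosed (F' : Set K) := F'.closed_of_finiteDimensional
  set V : Set (X × K) := Set.univ ×ˢ (F' : Set K) with hV
  -- key: image of complement is complement of image
  have hcompl : B' '' Vᶜ = (B' '' V)ᶜ := by
    apply Set.eq_of_subset_of_subset
    · rintro _ ⟨⟨x, k⟩, hz, rfl⟩ ⟨⟨x', k'⟩, hz', heq⟩
      have hk' : (k' : X) ∈ R := hz'.2
      have hk : (k : X) ∉ R := fun h => hz ⟨Set.mem_univ _, h⟩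
      have heq' := congrArg Subtype.val heq
      simp only [hB', hB, ContinuousLinearMap.coe_codRestrict_apply,
        ContinuousLinearMap.coprod_apply, Submodule.coe_subtypeL',
        Submodule.coe_subtype] at heq'
      apply hk
      have hkeq : (k : X) = (T ^ n) x' + (k' : X) - (T ^ n) x := by
        rw [heq']; abel
      rw [hkeq]
      exact R.sub_mem (R.add_mem ⟨x', rfl⟩ hk') ⟨x, rfl⟩
    · intro m hm
      rcases hsurj m with ⟨z, rfl⟩
      exact ⟨z, fun hz => hm ⟨z, hz, rfl⟩, rfl⟩
  have hVclosed : IsClosed V := isClosed_univ.prod hF'closed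
  have hopen : IsOpen (B' '' Vᶜ) :=
    B'.isOpenMap hsurj _ hVclosed.isOpen_compl
  have himgclosed : IsClosed (B' '' V) := by
    rw [← isOpen_compl_iff, ← hcompl]; exact hopen
  -- R = val '' (B' '' V)
  have hRimg : (R : Set X) = Subtype.val '' (B' '' V) := by
    apply Set.eq_of_subset_of_subset
    · rintro _ ⟨x, rfl⟩
      exact ⟨B' (x, 0), ⟨(x, 0), ⟨Set.mem_univ _, F'.zero_mem⟩, rfl⟩, by simp [hB', hB, Module.End.pow_apply, ContinuousLinearMap.coe_coe]⟩
    · rintro _ ⟨_, ⟨⟨x, k⟩, hz, rfl⟩, rfl⟩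
      have hk : (k : X) ∈ R := hz.2
      exact R.add_mem ⟨x, rfl⟩ hk
  rw [hRimg]
  exact (hsup.isClosedEmbedding_subtypeVal.isClosedMap) _ himgclosed
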